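/- arXiv:2308.01258 — 2 statements merged into one kernel-verified Lean document; each statement's English description precedes it below -/
import Mathlib

section
/- Let q = p^r > 3 with p a prime, p ≠ 2 and p ≠ 3, let t(x) = x + ∑_{k=0}^{q-2} x^k ∈ F_q[x], and let f_2(x_1,x_2) be the reduced form of t(x_1^{q-2} + x_2^{q-2}). Then the reduced form of t(f_2 + x_3^{q-2}) ∈ F_q[x_1,x_2,x_3] has total degree 3(q-2) (the maximum possible degree of an LPP in three variables). -/
open MvPolynomial
open Finset


section Helpers
variable {F : Type*} [Field F] [Fintype F] [DecidableEq F]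

lemma sum_pow_card (hq : 3 < Fintype.card F) (m : ℕ) (hm : m < 2 * (Fintype.card F - 1)) :
    ∑ x : F, x ^ m = if m + 1 = Fintype.card F then -1 else 0 := by
  rcases Nat.eq_zero_or_pos m with rfl | hm0
  · simp only [pow_zero]
    rw [if_neg (by omega), Finset.sum_const, Finset.card_univ, nsmul_eq_mul, mul_one]
    exact FiniteField.cast_card_eq_zero F
  have hmap : (Finset.univ.erase (0:F)) = Finset.univ.map ⟨((↑) : Fˣ → F), Units.val_injective⟩ := by
    ext x
    simp only [Finset.mem_erase, Finset.mem_univ, and_true, Finset.mem_map,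
      true_and, Function.Embedding.coeFn_mk]
    exact ⟨fun hx => isUnit_iff_ne_zero.mpr hx, fun ⟨u, hu⟩ => hu ▸ u.ne_zero⟩
  have h1 : ∑ x : F, x ^ m = ∑ u : Fˣ, (u : F) ^ m := by
    rw [← Finset.sum_erase (f := fun x : F => x ^ m) (a := (0:F)) Finset.univ
      (show (0:F)^m = 0 from zero_pow (by omega)), hmap, Finset.sum_map]
    rfl
  rw [h1, FiniteField.sum_pow_units F m]
  congr 1
  rw [eq_iff_iff]
  constructor
  · rintro ⟨k, hk⟩
    have h2 : k = 1 := by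
      rcases k with _ | _ | k
      · omega
      · rfl
      · exfalso; nlinarith
    subst h2
    omega
  · intro h; exact ⟨1, by omega⟩
end Helpers

section Coeff
variable {F : Type*} [Field F] [Fintype F] [DecidableEq F]

lemma coeff_of_sum {n : ℕ} (hq : 3 < Fintype.card F) (g : MvPolynomial (Fin n) F)
    (hg : ∀ i, g.degreeOf i < Fintype.card F) (d : Fin n → ℕ)
    (hd : ∀ i, d i + 2 ≤ Fintype.card F) :
    ∑ v : Fin n → F, eval v g * ∏ i, v i ^ d i
      = (-1)^n * coeff (Finsupp.equivFunOnFinite.symm fun i => Fintype.card F - 1 - d i) g := by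
  have hsupp : ∀ a ∈ g.support, ∀ i, (a : (Fin n →₀ ℕ)) i ≤ Fintype.card F - 1 := by
    intro a ha i
    have := (MvPolynomial.degreeOf_lt_iff (by omega : 0 < Fintype.card F)).mp (hg i) a ha
    omega
  have stepA : ∀ v : Fin n → F, eval v g * ∏ i, v i ^ d i
      = ∑ a ∈ g.support, coeff a g * ∏ i, v i ^ (a i + d i) := by
    intro v
    rw [MvPolynomial.eval_eq', Finset.sum_mul]
    refine Finset.sum_congr rfl fun a _ => ?_
    rw [mul_assoc, ← Finset.prod_mul_distrib]
    simp_rw [← pow_add]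
  simp_rw [stepA]
  rw [Finset.sum_comm]
  have stepC : ∀ a ∈ g.support,
      ∑ v : Fin n → F, coeff a g * ∏ i, v i ^ (a i + d i)
      = coeff a g * if (∀ i, a i + d i + 1 = Fintype.card F) then (-1:F)^n else 0 := by
    intro a ha
    rw [← Finset.mul_sum, ← Fintype.prod_sum (fun i x => x ^ (a i + d i))]
    congr 1
    have : ∀ i : Fin n, ∑ x : F, x ^ (a i + d i)
        = if a i + d i + 1 = Fintype.card F then (-1:F) else 0 := fun i =>
      sum_pow_card hq _ (by have := hsupp a ha i; have := hd i; omega)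
    simp_rw [this]
    by_cases hall : ∀ i, a i + d i + 1 = Fintype.card F
    · rw [if_pos hall]
      rw [Finset.prod_congr rfl fun i _ => if_pos (hall i), Finset.prod_const,
        Finset.card_univ, Fintype.card_fin]
    · rw [if_neg hall]
      push_neg at hall
      obtain ⟨i, hi⟩ := hall
      exact Finset.prod_eq_zero (Finset.mem_univ i) (if_neg hi)
  rw [Finset.sum_congr rfl stepC]
  have hcond : ∀ a : Fin n →₀ ℕ, (∀ i, a i + d i + 1 = Fintype.card F)
      ↔ a = Finsupp.equivFunOnFinite.symm fun i => Fintype.card F - 1 - d i := by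
    intro a
    constructor
    · intro h; ext i
      have := h i; have := hd i
      simp only [Finsupp.coe_equivFunOnFinite_symm]
      omega
    · intro h i
      subst h
      have := hd i
      simp only [Finsupp.coe_equivFunOnFinite_symm]
      omega
  set astar : Fin n →₀ ℕ := Finsupp.equivFunOnFinite.symm fun i => Fintype.card F - 1 - d i
    with hastar
  have : ∀ a ∈ g.support, (coeff a g * if (∀ i, a i + d i + 1 = Fintype.card F) then (-1:F)^n
      else 0) = if a = astar then coeff a g * (-1)^n else 0 := by
    intro a _
    by_cases h : a = astar
    · rw [if_pos h, if_pos ((hcond a).mpr h)]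
    · rw [if_neg h, if_neg (fun hh => h ((hcond a).mp hh)), mul_zero]
  rw [Finset.sum_congr rfl this, Finset.sum_ite_eq' g.support astar (fun a => coeff a g * (-1)^n)]
  by_cases hmem : astar ∈ g.support
  · rw [if_pos hmem, mul_comm]
  · rw [if_neg hmem, MvPolynomial.notMem_support_iff.mp hmem, mul_zero]
end Coeff

section Sums
set_option linter.unusedSectionVars false
variable {F : Type*} [Field F] [Fintype F] [DecidableEq F]

/-- the permutation of `F` swapping 0 and 1 -/
def ttF (z : F) : F := if z = 0 then 1 else if z = 1 then 0 else z

lemma ttF_eq_swap (z : F) : ttF z = Equiv.swap (0:F) 1 z := by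
  rw [Equiv.swap_apply_def]; rfl

lemma ttF_split (u : F) : ttF u = u + (if u = 0 then 1 else 0) - (if u = 1 then 1 else 0) := by
  unfold ttF
  by_cases h0 : u = 0
  · simp [h0]
  · by_cases h1 : u = 1 <;> simp [h0, h1]

lemma ite_sum_eval (W c : F) (φ : F → F) :
    ∑ z : F, (if W + z = c then (1:F) else 0) * φ z = φ (c - W) := by
  have h : ∀ z : F, ((if W + z = c then (1:F) else 0) * φ z)
      = if z = c - W then φ z else 0 := by
    intro z
    have hiff : (W + z = c) ↔ (z = c - W) :=
      ⟨fun h => by linear_combination h, fun h => by linear_combination h⟩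
    by_cases hz : W + z = c
    · rw [if_pos hz, if_pos (hiff.mp hz), one_mul]
    · rw [if_neg hz, if_neg (fun hh => hz (hiff.mpr hh)), zero_mul]
  simp_rw [h]
  rw [Finset.sum_ite_eq' Finset.univ (c - W) φ, if_pos (Finset.mem_univ _)]

variable (hq : 3 < Fintype.card F)
include hq

lemma sum_id : ∑ x : F, x = 0 := by
  have := sum_pow_card hq 1 (by omega)
  rw [if_neg (by omega)] at this
  simpa using this

lemma sum_invF : ∑ x : F, x⁻¹ = 0 := by
  rw [Fintype.sum_equiv (Equiv.inv F) (fun x : F => x⁻¹) (fun x : F => x) (fun x => rfl)]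
  exact sum_id hq

lemma sum_inv_pow (k : ℕ) (hk : k + 1 < Fintype.card F) : ∑ x : F, (x⁻¹)^k = 0 := by
  rw [Fintype.sum_equiv (Equiv.inv F) (fun x : F => (x⁻¹)^k) (fun x : F => x^k) (fun x => rfl)]
  rw [sum_pow_card hq k (by omega), if_neg (by omega)]

lemma sum_ttF (W : F) : ∑ z : F, ttF (W + z) = 0 := by
  rw [Fintype.sum_equiv (Equiv.addLeft W) (fun z : F => ttF (W + z)) (fun u : F => ttF u)
    (fun z => rfl)]
  simp_rw [ttF_eq_swap]
  rw [Equiv.sum_comp (Equiv.swap (0:F) 1) (fun u : F => u)]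
  exact sum_id hq

lemma sum_self_inv : ∑ z : F, z * z⁻¹ = -1 := by
  have h : ∀ z : F, z * z⁻¹ = 1 - (if z = 0 then 1 else 0) := by
    intro z
    by_cases hz : z = 0
    · simp [hz]
    · simp [hz, mul_inv_cancel₀ hz]
  simp_rw [h]
  rw [Finset.sum_sub_distrib, Finset.sum_const, Finset.card_univ,
    Finset.sum_ite_eq' Finset.univ (0:F) (fun _ => (1:F))]
  simp [FiniteField.cast_card_eq_zero]

lemma key1 (W : F) : ∑ z : F, ttF (W + z) * z⁻¹ = -1 + (0 - W)⁻¹ - (1 - W)⁻¹ := by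
  have h : ∀ z : F, ttF (W + z) * z⁻¹
      = (W * z⁻¹ + z * z⁻¹) + (if W + z = 0 then (1:F) else 0) * z⁻¹
        - (if W + z = 1 then (1:F) else 0) * z⁻¹ := by
    intro z
    rw [ttF_split (W + z)]
    ring
  simp_rw [h]
  rw [Finset.sum_sub_distrib, Finset.sum_add_distrib, Finset.sum_add_distrib, ← Finset.mul_sum,
    sum_invF hq, mul_zero, sum_self_inv hq, ite_sum_eval W 0 (fun z : F => z⁻¹),
    ite_sum_eval W 1 (fun z : F => z⁻¹)]
  ring

lemma key2 (W : F) : ∑ z : F, ttF (W + z) * (z⁻¹)^2 = ((0-W)⁻¹)^2 - ((1 - W)⁻¹)^2 := by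
  have h : ∀ z : F, ttF (W + z) * (z⁻¹)^2
      = (W * (z⁻¹)^2 + z⁻¹) + (if W + z = 0 then (1:F) else 0) * (z⁻¹)^2
        - (if W + z = 1 then (1:F) else 0) * (z⁻¹)^2 := by
    intro z
    have hzz : z * (z⁻¹)^2 = z⁻¹ := by
      by_cases hz : z = 0
      · simp [hz]
      · rw [sq, ← mul_assoc, mul_inv_cancel₀ hz, one_mul]
    calc ttF (W + z) * (z⁻¹)^2
        = (W * (z⁻¹)^2 + z * (z⁻¹)^2) + (if W + z = 0 then (1:F) else 0) * (z⁻¹)^2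
          - (if W + z = 1 then (1:F) else 0) * (z⁻¹)^2 := by rw [ttF_split (W + z)]; ring
      _ = _ := by rw [hzz]
  simp_rw [h]
  rw [Finset.sum_sub_distrib, Finset.sum_add_distrib, Finset.sum_add_distrib, ← Finset.mul_sum,
    sum_inv_pow hq 2 (by omega), mul_zero, sum_invF hq,
    ite_sum_eval W 0 (fun z : F => (z⁻¹)^2), ite_sum_eval W 1 (fun z : F => (z⁻¹)^2)]
  ring

end Sums

section Cases
set_option linter.unusedSectionVars false
variable {F : Type*} [Field F] [Fintype F] [DecidableEq F]

lemma sum_shiftL (x : F) (h : F → F) : ∑ y : F, h (x + y) = ∑ s : F, h s :=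
  Fintype.sum_equiv (Equiv.addLeft x) _ h (fun _ => rfl)

lemma sum_shiftR (y : F) (h : F → F) : ∑ x : F, h (x + y) = ∑ s : F, h s :=
  Fintype.sum_equiv (Equiv.addRight y) _ h (fun _ => rfl)

lemma sum_subL (a : F) (h : F → F) : ∑ x : F, h (a - x) = ∑ s : F, h s :=
  Fintype.sum_equiv (Equiv.subLeft a) _ h (fun _ => rfl)

variable (hq : 3 < Fintype.card F)
include hq

lemma S_d3_zero (d1 d2 : ℕ) :
    ∑ x : F, ∑ y : F, ∑ z : F, ttF (ttF (x+y)+z) * ((x⁻¹)^d1 * (y⁻¹)^d2 * (z⁻¹)^0) = 0 := by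
  have h : ∀ x y : F, ∑ z : F, ttF (ttF (x+y)+z) * ((x⁻¹)^d1 * (y⁻¹)^d2 * (z⁻¹)^0)
      = 0 := by
    intro x y
    simp only [pow_zero, mul_one]
    rw [← Finset.sum_mul, sum_ttF hq, zero_mul]
  simp_rw [h]
  simp

lemma S001 : ∑ x : F, ∑ y : F, ∑ z : F,
    ttF (ttF (x+y)+z) * ((x⁻¹)^0 * (y⁻¹)^0 * (z⁻¹)^1) = 0 := by
  simp only [pow_zero, pow_one, one_mul]
  simp_rw [key1 hq]
  have h : ∀ x : F, ∑ y : F, (-1 + (0 - ttF (x + y))⁻¹ - (1 - ttF (x + y))⁻¹)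
      = ∑ s : F, (-1 + (0 - ttF s)⁻¹ - (1 - ttF s)⁻¹) :=
    fun x => sum_shiftL x (fun s => -1 + (0 - ttF s)⁻¹ - (1 - ttF s)⁻¹)
  simp_rw [h]
  rw [Finset.sum_const, Finset.card_univ, nsmul_eq_mul, FiniteField.cast_card_eq_zero, zero_mul]

lemma S002 : ∑ x : F, ∑ y : F, ∑ z : F,
    ttF (ttF (x+y)+z) * ((x⁻¹)^0 * (y⁻¹)^0 * (z⁻¹)^2) = 0 := by
  simp only [pow_zero, one_mul]
  simp_rw [key2 hq]
  have h : ∀ x : F, ∑ y : F, (((0 - ttF (x + y))⁻¹)^2 - ((1 - ttF (x + y))⁻¹)^2)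
      = ∑ s : F, (((0 - ttF s)⁻¹)^2 - ((1 - ttF s)⁻¹)^2) :=
    fun x => sum_shiftL x (fun s => ((0 - ttF s)⁻¹)^2 - ((1 - ttF s)⁻¹)^2)
  simp_rw [h]
  rw [Finset.sum_const, Finset.card_univ, nsmul_eq_mul, FiniteField.cast_card_eq_zero, zero_mul]

lemma S101 : ∑ x : F, ∑ y : F, ∑ z : F,
    ttF (ttF (x+y)+z) * ((x⁻¹)^1 * (y⁻¹)^0 * (z⁻¹)^1) = 0 := by
  simp only [pow_zero, pow_one, mul_one]
  have h : ∀ x y : F, ∑ z : F, ttF (ttF (x+y)+z) * (x⁻¹ * z⁻¹)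
      = (-1 + (0 - ttF (x+y))⁻¹ - (1 - ttF (x+y))⁻¹) * x⁻¹ := by
    intro x y
    have : ∀ z : F, ttF (ttF (x+y)+z) * (x⁻¹ * z⁻¹)
        = (ttF (ttF (x+y)+z) * z⁻¹) * x⁻¹ := fun z => by ring
    simp_rw [this]
    rw [← Finset.sum_mul, key1 hq]
  simp_rw [h]
  have h2 : ∀ x : F, ∑ y : F, (-1 + (0 - ttF (x+y))⁻¹ - (1 - ttF (x+y))⁻¹) * x⁻¹
      = (∑ s : F, (-1 + (0 - ttF s)⁻¹ - (1 - ttF s)⁻¹)) * x⁻¹ := by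
    intro x
    rw [← Finset.sum_mul]
    congr 1
    exact sum_shiftL x (fun s => -1 + (0 - ttF s)⁻¹ - (1 - ttF s)⁻¹)
  simp_rw [h2]
  rw [← Finset.mul_sum, sum_invF hq, mul_zero]

lemma S011 : ∑ x : F, ∑ y : F, ∑ z : F,
    ttF (ttF (x+y)+z) * ((x⁻¹)^0 * (y⁻¹)^1 * (z⁻¹)^1) = 0 := by
  simp only [pow_zero, pow_one, one_mul]
  have h : ∀ x y : F, ∑ z : F, ttF (ttF (x+y)+z) * (y⁻¹ * z⁻¹)
      = (-1 + (0 - ttF (x+y))⁻¹ - (1 - ttF (x+y))⁻¹) * y⁻¹ := by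
    intro x y
    have : ∀ z : F, ttF (ttF (x+y)+z) * (y⁻¹ * z⁻¹)
        = (ttF (ttF (x+y)+z) * z⁻¹) * y⁻¹ := fun z => by ring
    simp_rw [this]
    rw [← Finset.sum_mul, key1 hq]
  simp_rw [h]
  rw [Finset.sum_comm]
  have h2 : ∀ y : F, ∑ x : F, (-1 + (0 - ttF (x+y))⁻¹ - (1 - ttF (x+y))⁻¹) * y⁻¹
      = (∑ s : F, (-1 + (0 - ttF s)⁻¹ - (1 - ttF s)⁻¹)) * y⁻¹ := by
    intro y
    rw [← Finset.sum_mul]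
    congr 1
    exact sum_shiftR y (fun s => -1 + (0 - ttF s)⁻¹ - (1 - ttF s)⁻¹)
  simp_rw [h2]
  rw [← Finset.mul_sum, sum_invF hq, mul_zero]

lemma conv_sum (s : F) : ∑ x : F, x⁻¹ * (s - x)⁻¹ = -2 * (s⁻¹)^2 := by
  by_cases hs : s = 0
  · subst hs
    have h : ∀ x : F, x⁻¹ * ((0:F) - x)⁻¹ = -((x⁻¹)^2) := by
      intro x
      rw [zero_sub, inv_neg]
      ring
    simp_rw [h]
    rw [Finset.sum_neg_distrib, sum_inv_pow hq 2 (by omega), neg_zero]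
    simp
  · have hpt : ∀ x : F, x⁻¹ * (s - x)⁻¹
        = s⁻¹ * x⁻¹ + s⁻¹ * (s - x)⁻¹
          - (s⁻¹ * s⁻¹) * ((if x = 0 then 1 else 0) + (if x = s then 1 else 0)) := by
      intro x
      by_cases h0 : x = 0
      · subst h0
        rw [if_pos rfl, if_neg (fun h => hs h.symm)]
        simp
      · by_cases h1 : x = s
        · subst h1
          rw [if_neg h0, if_pos rfl]
          simp
        · rw [if_neg h0, if_neg h1]
          have hsx : s - x ≠ 0 := sub_ne_zero_of_ne (fun h => h1 h.symm)
          field_simp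
          ring
    simp_rw [hpt]
    rw [Finset.sum_sub_distrib, Finset.sum_add_distrib, ← Finset.mul_sum, ← Finset.mul_sum,
      sum_invF hq, mul_zero, sum_subL s (fun u : F => u⁻¹), sum_invF hq, mul_zero,
      ← Finset.mul_sum, Finset.sum_add_distrib,
      Finset.sum_ite_eq' Finset.univ (0:F) (fun _ => (1:F)),
      Finset.sum_ite_eq' Finset.univ s (fun _ => (1:F))]
    simp only [Finset.mem_univ, if_pos]
    ring

lemma final_sum (hq5 : 4 < Fintype.card F) :
    ∑ s : F, (-1 + (0 - ttF s)⁻¹ - (1 - ttF s)⁻¹) * (-2 * (s⁻¹)^2) = -6 := by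
  have hpt : ∀ s : F, (-1 + (0 - ttF s)⁻¹ - (1 - ttF s)⁻¹) * (-2 * (s⁻¹)^2)
      = (4*(s⁻¹)^2 + 2*(s⁻¹)^3 + 2*s⁻¹ + 2*(1-s)⁻¹)
        + (if s = 0 then -2 else 0) + (if s = 1 then -4 else 0) := by
    intro s
    by_cases h0 : s = 0
    · subst h0
      unfold ttF
      norm_num
    · by_cases h1 : s = 1
      · subst h1
        unfold ttF
        norm_num
      · have h1s : (1:F) - s ≠ 0 := sub_ne_zero_of_ne (fun h => h1 h.symm)
        simp only [ttF, if_neg h0, if_neg h1]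
        rw [zero_sub, inv_neg]
        have ha : s * s⁻¹ = 1 := mul_inv_cancel₀ h0
        have hb : (1 - s) * (1 - s)⁻¹ = 1 := mul_inv_cancel₀ h1s
        linear_combination (2*(1-s)⁻¹*(s⁻¹+1)) * ha + (2*((s⁻¹)^2 + s⁻¹)) * hb
  simp_rw [hpt]
  rw [Finset.sum_add_distrib, Finset.sum_add_distrib,
    Finset.sum_ite_eq' Finset.univ (0:F) (fun _ => (-2:F)),
    Finset.sum_ite_eq' Finset.univ (1:F) (fun _ => (-4:F))]
  have e1 : ∑ s : F, (4*(s⁻¹)^2 + 2*(s⁻¹)^3 + 2*s⁻¹ + 2*(1-s)⁻¹) = 0 := by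
    rw [Finset.sum_add_distrib, Finset.sum_add_distrib, Finset.sum_add_distrib,
      ← Finset.mul_sum, ← Finset.mul_sum, ← Finset.mul_sum, ← Finset.mul_sum,
      sum_inv_pow hq 2 (by omega), sum_inv_pow hq 3 (by omega), sum_invF hq,
      sum_subL (1:F) (fun u : F => u⁻¹), sum_invF hq]
    ring
  rw [e1]
  norm_num

lemma S111 (hq5 : 4 < Fintype.card F) : ∑ x : F, ∑ y : F, ∑ z : F,
    ttF (ttF (x+y)+z) * ((x⁻¹)^1 * (y⁻¹)^1 * (z⁻¹)^1) = -6 := by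
  simp only [pow_one]
  have h : ∀ x y : F, ∑ z : F, ttF (ttF (x+y)+z) * (x⁻¹ * y⁻¹ * z⁻¹)
      = (-1 + (0 - ttF (x+y))⁻¹ - (1 - ttF (x+y))⁻¹) * (x⁻¹ * y⁻¹) := by
    intro x y
    have : ∀ z : F, ttF (ttF (x+y)+z) * (x⁻¹ * y⁻¹ * z⁻¹)
        = (ttF (ttF (x+y)+z) * z⁻¹) * (x⁻¹ * y⁻¹) := fun z => by ring
    simp_rw [this]
    rw [← Finset.sum_mul, key1 hq]
  simp_rw [h]
  have h2 : ∀ x : F, ∑ y : F,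
      (-1 + (0 - ttF (x+y))⁻¹ - (1 - ttF (x+y))⁻¹) * (x⁻¹ * y⁻¹)
      = ∑ s : F, (-1 + (0 - ttF s)⁻¹ - (1 - ttF s)⁻¹) * (x⁻¹ * (s - x)⁻¹) := by
    intro x
    exact Fintype.sum_equiv (Equiv.addLeft x) _
      (fun s => (-1 + (0 - ttF s)⁻¹ - (1 - ttF s)⁻¹) * (x⁻¹ * (s - x)⁻¹))
      (fun y => by simp)
  simp_rw [h2]
  rw [Finset.sum_comm]
  have h3 : ∀ s : F, ∑ x : F,
      (-1 + (0 - ttF s)⁻¹ - (1 - ttF s)⁻¹) * (x⁻¹ * (s - x)⁻¹)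
      = (-1 + (0 - ttF s)⁻¹ - (1 - ttF s)⁻¹) * (-2 * (s⁻¹)^2) := by
    intro s
    rw [← Finset.mul_sum, conv_sum hq s]
  simp_rw [h3]
  exact final_sum hq hq5

lemma S_small (k0 k1 k2 : ℕ) (h : k0 + k1 + k2 ≤ 2) :
    ∑ x : F, ∑ y : F, ∑ z : F,
      ttF (ttF (x+y)+z) * ((x⁻¹)^k0 * (y⁻¹)^k1 * (z⁻¹)^k2) = 0 := by
  rcases k2 with _ | k2
  · exact S_d3_zero hq _ _
  rcases k2 with _ | k2
  · rcases k0 with _ | k0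
    · rcases k1 with _ | k1
      · exact S001 hq
      · rcases k1 with _ | k1
        · exact S011 hq
        · omega
    · rcases k0 with _ | k0
      · rcases k1 with _ | k1
        · exact S101 hq
        · omega
      · omega
  rcases k2 with _ | k2
  · rcases k0 with _ | k0
    · rcases k1 with _ | k1
      · exact S002 hq
      · omega
    · omega
  · omega

end Cases




/-- For `q = p^r > 3` with `p ≠ 2, 3` prime, `t(x) = x + ∑_{k=0}^{q-2} x^k` and `f₂` the
reduced form of `t(x₁^{q-2} + x₂^{q-2})`, the reduced form `g` of `t(f₂ + x₃^{q-2})`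
has total degree `3(q-2)`. -/
theorem lpp_three_vars_variant {p r : ℕ} (hp : p.Prime) (hp2 : p ≠ 2) (hp3 : p ≠ 3)
    (hr : 0 < r)
    {F : Type*} [Field F] [Fintype F] [DecidableEq F]
    (hF : Fintype.card F = p ^ r) (hq : 3 < Fintype.card F)
    (t : Polynomial F)
    (ht : t = Polynomial.X + ∑ k ∈ Finset.range (Fintype.card F - 1), Polynomial.X ^ k)
    (f₂ : MvPolynomial (Fin 2) F)
    (hred₂ : ∀ i : Fin 2, f₂.degreeOf i < Fintype.card F)
    (heq₂ : ∀ x : Fin 2 → F, eval x f₂ =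
      Polynomial.eval ((x 0) ^ (Fintype.card F - 2) + (x 1) ^ (Fintype.card F - 2)) t)
    (g : MvPolynomial (Fin 3) F)
    (hredg : ∀ i : Fin 3, g.degreeOf i < Fintype.card F)
    (heqg : ∀ x : Fin 3 → F, eval x g =
      Polynomial.eval ((eval ![x 0, x 1] f₂) + (x 2) ^ (Fintype.card F - 2)) t) :
    g.totalDegree = 3 * (Fintype.card F - 2) := by
  set q := Fintype.card F with hqdef
  -- q is odd, hence q ≥ 5
  have hodd : Odd q := by
    rw [hF]
    exact (hp.odd_of_ne_two hp2).pow
  have hq5 : 4 < q := by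
    obtain ⟨k, hk⟩ := hodd
    omega
  -- characteristic facts
  have h6 : (6 : F) ≠ 0 := by
    intro h6
    obtain ⟨n, hcp, hcard⟩ := FiniteField.card F (ringChar F)
    have hpr : p ∣ (ringChar F) ^ (n:ℕ) := by
      rw [← hcard, ← hqdef, hF]
      exact dvd_pow_self p hr.ne'
    have hpc : p = ringChar F :=
      (Nat.prime_dvd_prime_iff_eq hp hcp).mp (hp.dvd_of_dvd_pow hpr)
    have hdvd : ringChar F ∣ 6 := by
      rw [← CharP.cast_eq_zero_iff F (ringChar F) 6]
      exact_mod_cast h6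
    rw [← hpc] at hdvd
    have hle : p ≤ 6 := Nat.le_of_dvd (by norm_num) hdvd
    interval_cases p <;>
      first
        | exact hp2 rfl
        | exact hp3 rfl
        | exact absurd hp (by decide)
        | exact absurd hdvd (by decide)
  -- evaluation of t
  have htt : ∀ z : F, Polynomial.eval z t = ttF z := by
    intro z
    rw [ht]
    simp only [Polynomial.eval_add, Polynomial.eval_X, Polynomial.eval_finset_sum,
      Polynomial.eval_pow]
    by_cases hz0 : z = 0
    · subst hz0
      have : ∀ k ∈ Finset.range (q - 1), (0:F)^k = if k = 0 then 1 else 0 := by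
        intro k _
        rw [zero_pow_eq]
      rw [Finset.sum_congr rfl this, Finset.sum_ite_eq' (Finset.range (q-1)) 0 (fun _ => (1:F)),
        if_pos (Finset.mem_range.mpr (by omega))]
      simp [ttF]
    · by_cases hz1 : z = 1
      · subst hz1
        simp only [one_pow, Finset.sum_const, Finset.card_range, nsmul_eq_mul, mul_one]
        rw [Nat.cast_sub (by omega : 1 ≤ q)]
        have hcast : ((q:ℕ):F) = 0 := FiniteField.cast_card_eq_zero F
        rw [hcast]
        simp [ttF]
      · rw [geom_sum_eq hz1, FiniteField.pow_card_sub_one_eq_one z hz0]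
        simp [ttF, hz0, hz1]
  -- x ^ (q-2) is the inverse
  have hinv : ∀ x : F, x ^ (q - 2) = x⁻¹ := by
    intro x
    by_cases hx : x = 0
    · subst hx
      rw [zero_pow (by omega : q - 2 ≠ 0), inv_zero]
    · have h1 : x * x ^ (q - 2) = 1 := by
        rw [← pow_succ']
        rw [show q - 2 + 1 = q - 1 by omega]
        exact FiniteField.pow_card_sub_one_eq_one x hx
      exact (inv_eq_of_mul_eq_one_right h1).symm
  -- evaluation of g
  have hGv : ∀ v : Fin 3 → F, eval v g = ttF (ttF ((v 0)⁻¹ + (v 1)⁻¹) + (v 2)⁻¹) := by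
    intro v
    rw [heqg v, heq₂ ![v 0, v 1]]
    simp only [Matrix.cons_val_zero, Matrix.cons_val_one, Matrix.head_cons]
    rw [htt, htt, hinv, hinv, hinv]
  -- the equivalence (F × F × F) ≃ (Fin 3 → F)
  let e3 : (F × F × F) ≃ (Fin 3 → F) :=
    { toFun := fun p => ![p.1, p.2.1, p.2.2]
      invFun := fun v => (v 0, v 1, v 2)
      left_inv := fun p => rfl
      right_inv := fun v => by
        funext i
        fin_cases i <;> rfl }
  -- moment sums of g
  have hSd : ∀ d : Fin 3 → ℕ, (∑ v : Fin 3 → F, eval v g * ∏ i, v i ^ d i)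
      = ∑ x : F, ∑ y : F, ∑ z : F,
        ttF (ttF (x+y)+z) * ((x⁻¹)^(d 0) * (y⁻¹)^(d 1) * (z⁻¹)^(d 2)) := by
    intro d
    calc ∑ v : Fin 3 → F, eval v g * ∏ i, v i ^ d i
        = ∑ pr : F × F × F, eval (e3 pr) g * ∏ i, (e3 pr) i ^ d i :=
          (Equiv.sum_comp e3 (fun v => eval v g * ∏ i, v i ^ d i)).symm
      _ = ∑ a : F, ∑ b : F, ∑ c : F,
            ttF (ttF (a⁻¹+b⁻¹)+c⁻¹) * (a^(d 0) * b^(d 1) * c^(d 2)) := by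
          rw [Fintype.sum_prod_type]
          refine Finset.sum_congr rfl fun a _ => ?_
          rw [Fintype.sum_prod_type]
          refine Finset.sum_congr rfl fun b _ => Finset.sum_congr rfl fun c _ => ?_
          have he : e3 (a, b, c) = ![a, b, c] := rfl
          rw [he, hGv ![a,b,c], Fin.prod_univ_three]
          simp [Matrix.cons_val_zero, Matrix.cons_val_one, Matrix.head_cons]
      _ = ∑ x : F, ∑ y : F, ∑ z : F,
            ttF (ttF (x+y)+z) * ((x⁻¹)^(d 0) * (y⁻¹)^(d 1) * (z⁻¹)^(d 2)) := by
          refine Fintype.sum_equiv (Equiv.inv F) _ _ fun x => ?_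
          refine Fintype.sum_equiv (Equiv.inv F) _ _ fun y => ?_
          refine Fintype.sum_equiv (Equiv.inv F) _ _ fun z => ?_
          simp [inv_inv]
  -- the main coefficient is 6
  have hd1 : ∀ i : Fin 3, (fun _ : Fin 3 => 1) i + 2 ≤ q := fun i => by
    show (1:ℕ) + 2 ≤ q
    omega
  have cmain : coeff (Finsupp.equivFunOnFinite.symm fun _ : Fin 3 => q - 2) g = 6 := by
    have hc := coeff_of_sum hq g hredg (fun _ => 1) hd1
    rw [hSd (fun _ => 1)] at hc
    have hS := S111 hq hq5 (F := F)
    rw [hS] at hc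
    have hfe : (fun i : Fin 3 => q - 1 - (fun _ : Fin 3 => 1) i) = fun _ : Fin 3 => q - 2 := by
      funext i
      show q - 1 - 1 = q - 2
      omega
    rw [hfe] at hc
    have := hc
    rw [show ((-1:F))^3 = -1 by norm_num] at this
    linear_combination this
  -- all coefficients of higher degree vanish
  have czero : ∀ d : Fin 3 → ℕ, d 0 + d 1 + d 2 ≤ 2 →
      coeff (Finsupp.equivFunOnFinite.symm fun i => q - 1 - d i) g = 0 := by
    intro d hd
    have hd2 : ∀ i : Fin 3, d i + 2 ≤ q := by
      intro i
      fin_cases i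
      · show d 0 + 2 ≤ q; omega
      · show d 1 + 2 ≤ q; omega
      · show d 2 + 2 ≤ q; omega
    have hc := coeff_of_sum hq g hredg d hd2
    rw [hSd d] at hc
    have hzero : (∑ x : F, ∑ y : F, ∑ z : F,
        ttF (ttF (x+y)+z) * ((x⁻¹)^(d 0) * (y⁻¹)^(d 1) * (z⁻¹)^(d 2))) = 0 :=
      S_small hq (d 0) (d 1) (d 2) hd
    rw [hzero] at hc
    rw [show ((-1:F))^3 = -1 by norm_num] at hc
    linear_combination hc
  -- conclude
  set astar : Fin 3 →₀ ℕ := Finsupp.equivFunOnFinite.symm fun _ : Fin 3 => q - 2 with hastar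
  have hmem : astar ∈ g.support := by
    rw [MvPolynomial.mem_support_iff, cmain]
    exact h6
  have hsum_astar : (astar.sum fun _ e => e) = 3 * (q - 2) := by
    rw [Finsupp.sum_fintype _ _ (fun _ => rfl), Fin.sum_univ_three]
    simp only [hastar, Finsupp.coe_equivFunOnFinite_symm]
    ring
  apply le_antisymm
  · rw [MvPolynomial.totalDegree]
    apply Finset.sup_le
    intro a ha
    by_contra hgt
    push_neg at hgt
    have haile : ∀ i : Fin 3, a i ≤ q - 1 := by
      intro i
      have := (MvPolynomial.degreeOf_lt_iff (by omega : 0 < q)).mp (hredg i) a ha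
      omega
    have hasum : (a.sum fun _ e => e) = a 0 + a 1 + a 2 := by
      rw [Finsupp.sum_fintype _ _ (fun _ => rfl), Fin.sum_univ_three]
    rw [hasum] at hgt
    set d : Fin 3 → ℕ := fun i => q - 1 - a i with hd
    have hdsum : d 0 + d 1 + d 2 ≤ 2 := by
      have h0 := haile 0
      have h1 := haile 1
      have h2 := haile 2
      simp only [hd]
      omega
    have haeq : a = Finsupp.equivFunOnFinite.symm fun i => q - 1 - d i := by
      ext i
      simp only [Finsupp.coe_equivFunOnFinite_symm, hd]
      have := haile i
      omega
    have := czero d hdsum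
    rw [← haeq] at this
    exact (MvPolynomial.mem_support_iff.mp ha) this
  · rw [← hsum_astar]
    exact MvPolynomial.le_totalDegree hmem
end

section
/- Let q = 3^r > 3, let t(x) = x + ∑_{k=0}^{q-2} x^k ∈ F_q[x], and let f̄_2(x_1,x_2) be the reduced form of t(x_1^{q-4} + x_2^{q-2}). Then the reduced form of t(f̄_2 + x_3^{q-2}) ∈ F_q[x_1,x_2,x_3] has total degree 3(q-2) (the maximum possible degree of an LPP in three variables). -/
set_option linter.unusedSectionVars false
set_option maxHeartbeats 1000000

open MvPolynomial

namespace LppAux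

variable {F : Type*} [Field F] [Fintype F] [DecidableEq F]

/-! ### Sums over a finite field -/

lemma sum_inv_comp (ψ : F → F) : ∑ c : F, ψ c⁻¹ = ∑ c : F, ψ c :=
  Equiv.sum_comp ⟨fun c : F => c⁻¹, fun c => c⁻¹, fun c => inv_inv c, fun c => inv_inv c⟩ ψ

lemma sum_shift (ψ : F → F) (y : F) : ∑ c : F, ψ (y + c) = ∑ c : F, ψ c :=
  Equiv.sum_comp (Equiv.addLeft y) ψ

lemma sum_subshift (ψ : F → F) (y : F) : ∑ c : F, ψ (c - y) = ∑ c : F, ψ c :=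
  Equiv.sum_comp (Equiv.subRight y) ψ

lemma sum_mobius_comp (ψ : F → F) : ∑ d : F, ψ (1 - d⁻¹) = ∑ c : F, ψ c :=
  Equiv.sum_comp ⟨fun d : F => 1 - d⁻¹, fun c => (1 - c)⁻¹,
    fun d => by show (1 - (1 - d⁻¹))⁻¹ = d; rw [sub_sub_cancel, inv_inv],
    fun c => by show 1 - ((1 - c)⁻¹)⁻¹ = c; rw [inv_inv, sub_sub_cancel]⟩ ψ

lemma sum_id_eq_zero (hq : 3 < Fintype.card F) : ∑ c : F, c = 0 := by
  have h := FiniteField.sum_pow_lt_card_sub_one (K := F) 1 (by omega)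
  simpa using h

lemma sum_inv_eq_zero (hq : 3 < Fintype.card F) : ∑ c : F, c⁻¹ = 0 := by
  rw [sum_inv_comp (fun c => c)]
  exact sum_id_eq_zero hq

lemma sum_pow_card_sub_one (hq : 3 < Fintype.card F) :
    ∑ c : F, c ^ (Fintype.card F - 1) = -1 := by
  have h1 : ∀ c : F, c ^ (Fintype.card F - 1) = 1 - (if c = 0 then 1 else 0) := by
    intro c
    rcases eq_or_ne c 0 with h | h
    · simp [h, zero_pow (by omega : Fintype.card F - 1 ≠ 0)]
    · simp [h, FiniteField.pow_card_sub_one_eq_one c h]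
  rw [Finset.sum_congr rfl fun c _ => h1 c, Finset.sum_sub_distrib]
  simp [Finset.card_univ, FiniteField.cast_card_eq_zero]

lemma aux_Sk {k : ℕ} (hq : 3 < Fintype.card F) (hk : k ≤ 2 * Fintype.card F - 3) :
    ∑ c : F, c ^ k = if k = Fintype.card F - 1 then -1 else 0 := by
  rcases lt_trichotomy k (Fintype.card F - 1) with h | h | h
  · rw [if_neg (by omega), FiniteField.sum_pow_lt_card_sub_one (K := F) k h]
  · rw [if_pos h, h, sum_pow_card_sub_one hq]
  · rw [if_neg (by omega)]
    have hc : ∀ c : F, c ^ k = c ^ (k - (Fintype.card F - 1)) := by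
      intro c
      rcases eq_or_ne c 0 with h0 | h0
      · rw [h0, zero_pow (by omega), zero_pow (by omega)]
      · conv_lhs => rw [show k = (k - (Fintype.card F - 1)) + (Fintype.card F - 1) by omega]
        rw [pow_add, FiniteField.pow_card_sub_one_eq_one c h0, mul_one]
    rw [Finset.sum_congr rfl fun c _ => hc c,
      FiniteField.sum_pow_lt_card_sub_one (K := F) _ (by omega)]

/-! ### Sums over triples -/

def tripleEquiv : (F × F × F) ≃ (Fin 3 → F) where
  toFun p := ![p.1, p.2.1, p.2.2]
  invFun x := (x 0, x 1, x 2)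
  left_inv p := by simp
  right_inv x := by
    funext i
    fin_cases i <;> simp

lemma sum3 (φ : (Fin 3 → F) → F) :
    ∑ x : Fin 3 → F, φ x = ∑ a : F, ∑ b : F, ∑ c : F, φ ![a, b, c] := by
  rw [← Equiv.sum_comp (tripleEquiv (F := F)) φ]
  rw [Fintype.sum_prod_type]
  simp [tripleEquiv, Fintype.sum_prod_type]

lemma sum_prod_pow (e : Fin 3 → ℕ) :
    ∑ x : Fin 3 → F, ∏ i, x i ^ e i = ∏ i, (∑ c : F, c ^ e i) := by
  rw [sum3 (fun x => ∏ i, x i ^ e i)]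
  simp only [Fin.prod_univ_three, Matrix.cons_val_zero, Matrix.cons_val_one, Matrix.head_cons,
    Matrix.cons_val_two, Matrix.tail_cons]
  rw [Finset.sum_mul_sum, Finset.sum_mul]
  refine Finset.sum_congr rfl fun a _ => ?_
  rw [Finset.sum_mul]
  refine Finset.sum_congr rfl fun b _ => ?_
  rw [Finset.mul_sum]

/-! ### The inversion formula for coefficients of reduced polynomials -/

lemma inversion (hq : 3 < Fintype.card F) (g : MvPolynomial (Fin 3) F)
    (hredg : ∀ i : Fin 3, g.degreeOf i < Fintype.card F)
    (m : Fin 3 → ℕ) (hm : ∀ i, m i ≤ Fintype.card F - 2) :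
    ∑ x : Fin 3 → F, MvPolynomial.eval x g * ∏ i, x i ^ m i
      = - g.coeff (Finsupp.equivFunOnFinite.symm fun i => Fintype.card F - 1 - m i) := by
  set q := Fintype.card F with hqdef
  set B : (Fin 3) →₀ ℕ := Finsupp.equivFunOnFinite.symm fun i => q - 1 - m i with hBdef
  have hBi : ∀ i, B i = q - 1 - m i := fun i => rfl
  calc ∑ x : Fin 3 → F, MvPolynomial.eval x g * ∏ i, x i ^ m i
      = ∑ x : Fin 3 → F, ∑ d ∈ g.support, g.coeff d * ∏ i, x i ^ (d i + m i) := by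
        refine Finset.sum_congr rfl fun x _ => ?_
        rw [MvPolynomial.eval_eq', Finset.sum_mul]
        refine Finset.sum_congr rfl fun d _ => ?_
        rw [mul_assoc, ← Finset.prod_mul_distrib]
        simp_rw [pow_add]
    _ = ∑ d ∈ g.support, g.coeff d * ∑ x : Fin 3 → F, ∏ i, x i ^ (d i + m i) := by
        rw [Finset.sum_comm]
        simp_rw [Finset.mul_sum]
    _ = ∑ d ∈ g.support, g.coeff d * ∏ i, (∑ c : F, c ^ (d i + m i)) := by
        simp_rw [sum_prod_pow]
    _ = ∑ d ∈ g.support, (if d = B then g.coeff d * (-1) else 0) := by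
        refine Finset.sum_congr rfl fun d hd => ?_
        have hdi : ∀ i, d i ≤ q - 1 := fun i => by
          have := (MvPolynomial.degreeOf_lt_iff (by omega : 0 < q)).mp (hredg i) d hd
          omega
        by_cases hdB : d = B
        · rw [if_pos hdB]
          congr 1
          have hdi' : ∀ i, d i + m i = q - 1 := fun i => by
            rw [hdB, hBi]
            have := hm i; omega
          have hfac : ∀ i : Fin 3, (∑ c : F, c ^ (d i + m i)) = -1 := fun i => by
            rw [aux_Sk hq (by have := hdi i; have := hm i; omega), if_pos (hdi' i)]
          rw [Fin.prod_univ_three, hfac 0, hfac 1, hfac 2]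
          ring
        · rw [if_neg hdB]
          have hex : ∃ i, d i ≠ q - 1 - m i := by
            by_contra hall
            push_neg at hall
            exact hdB (DFunLike.ext _ _ fun i => by rw [hall i, hBi i])
          obtain ⟨i, hi⟩ := hex
          have h0 : (∑ c : F, c ^ (d i + m i)) = 0 := by
            rw [aux_Sk hq (by have := hdi i; have := hm i; omega),
              if_neg (by have := hdi i; have := hm i; omega)]
          rw [Finset.prod_eq_zero (Finset.mem_univ i) h0, mul_zero]
    _ = - g.coeff B := by
        rw [Finset.sum_ite_eq' g.support B (fun d => g.coeff d * (-1))]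
        by_cases hB : B ∈ g.support
        · rw [if_pos hB]; ring
        · rw [if_neg hB, MvPolynomial.notMem_support_iff.mp hB]; ring

/-! ### The permutation `σ` swapping `0` and `1` -/

lemma sigma_eval (hq : 3 < Fintype.card F) (t : Polynomial F)
    (ht : t = Polynomial.X + ∑ k ∈ Finset.range (Fintype.card F - 1), Polynomial.X ^ k)
    (a : F) : Polynomial.eval a t = if a = 0 then 1 else if a = 1 then 0 else a := by
  subst ht
  simp only [Polynomial.eval_add, Polynomial.eval_X, Polynomial.eval_finset_sum,
    Polynomial.eval_pow]
  rcases eq_or_ne a 0 with h0 | h0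
  · subst h0
    rw [if_pos rfl]
    have h : ∑ k ∈ Finset.range (Fintype.card F - 1), (0:F) ^ k = 1 := by
      simp [zero_pow_eq]
      omega
    rw [h]; ring
  · rcases eq_or_ne a 1 with h1 | h1
    · subst h1
      rw [if_neg h0, if_pos rfl]
      simp only [one_pow, Finset.sum_const, Finset.card_range, nsmul_eq_mul, mul_one]
      have h : ((Fintype.card F - 1 : ℕ) : F) = -1 := by
        rw [Nat.cast_sub (by omega), FiniteField.cast_card_eq_zero]; simp
      rw [h]; ring
    · rw [if_neg h0, if_neg h1, geom_sum_eq h1, FiniteField.pow_card_sub_one_eq_one a h0]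
      simp

lemma three_eq_zero {r : ℕ} (hF : Fintype.card F = 3 ^ r) (hq : 3 < Fintype.card F) :
    (3 : F) = 0 := by
  have hr : r ≠ 0 := by
    rintro rfl
    rw [hF] at hq; norm_num at hq
  have h : (3 : F) ^ r = 0 := by
    have := FiniteField.cast_card_eq_zero F
    rw [hF] at this
    push_cast at this
    exact this
  exact pow_eq_zero_iff hr |>.mp h

lemma card_ge_nine {r : ℕ} (hF : Fintype.card F = 3 ^ r) (hq : 3 < Fintype.card F) :
    9 ≤ Fintype.card F := by
  have hr : 2 ≤ r := by
    by_contra h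
    interval_cases r <;> omega
  calc (9:ℕ) = 3 ^ 2 := by norm_num
    _ ≤ 3 ^ r := Nat.pow_le_pow_right (by norm_num) hr
    _ = Fintype.card F := hF.symm

lemma pow_qsub2 (hq : 3 < Fintype.card F) (c : F) : c ^ (Fintype.card F - 2) = c⁻¹ := by
  rcases eq_or_ne c 0 with h | h
  · simp [h, zero_pow (show Fintype.card F - 2 ≠ 0 by omega)]
  · have h1 : c ^ (Fintype.card F - 2) * c = 1 := by
      rw [← pow_succ, show Fintype.card F - 2 + 1 = Fintype.card F - 1 by omega,
        FiniteField.pow_card_sub_one_eq_one c h]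
    rw [inv_eq_one_div, eq_div_iff h]
    exact h1

lemma pow_qsub4 (hq9 : 9 ≤ Fintype.card F) (c : F) : c ^ (Fintype.card F - 4) = (c ^ 3)⁻¹ := by
  rcases eq_or_ne c 0 with h | h
  · simp [h, zero_pow (show Fintype.card F - 4 ≠ 0 by omega)]
  · have h1 : c ^ (Fintype.card F - 4) * c ^ 3 = 1 := by
      rw [← pow_add, show Fintype.card F - 4 + 3 = Fintype.card F - 1 by omega,
        FiniteField.pow_card_sub_one_eq_one c h]
    rw [inv_eq_one_div, eq_div_iff (pow_ne_zero 3 h)]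
    exact h1

section Sigma
variable (σ : F → F) (hσ : ∀ a : F, σ a = if a = 0 then 1 else if a = 1 then 0 else a)
include hσ

lemma sigma_zero : σ 0 = 1 := by rw [hσ]; simp

lemma sigma_one : σ 1 = 0 := by rw [hσ]; simp [one_ne_zero]

lemma sigma_invol : Function.Involutive σ := by
  intro a
  rcases eq_or_ne a 0 with rfl | h0
  · rw [sigma_zero σ hσ, sigma_one σ hσ]
  · rcases eq_or_ne a 1 with rfl | h1
    · rw [sigma_one σ hσ, sigma_zero σ hσ]
    · have ha : σ a = a := by rw [hσ a, if_neg h0, if_neg h1]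
      rw [ha, ha]

lemma sum_sigma_comp (ψ : F → F) : ∑ c : F, ψ (σ c) = ∑ c : F, ψ c :=
  Equiv.sum_comp ⟨σ, σ, sigma_invol σ hσ, sigma_invol σ hσ⟩ ψ

lemma A1_eq (hq : 3 < Fintype.card F) (y : F) :
    ∑ c : F, σ (y + c⁻¹) * c = -1 - y⁻¹ - (1 - y)⁻¹ := by
  have s1 : ∑ c : F, σ (y + c⁻¹) * c = ∑ c : F, σ (y + c) * c⁻¹ := by
    rw [← sum_inv_comp (fun c => σ (y + c) * c⁻¹)]
    exact Finset.sum_congr rfl fun c _ => by rw [inv_inv]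
  have s2 : ∑ c : F, σ (y + c) * c⁻¹ = ∑ v : F, σ v * (v - y)⁻¹ := by
    rw [← sum_shift (fun v => σ v * (v - y)⁻¹) y]
    exact Finset.sum_congr rfl fun c _ => by rw [add_sub_cancel_left]
  have s3 : ∀ v : F, σ v * (v - y)⁻¹ = v * (v - y)⁻¹
      + (if v = 0 then (0 - y)⁻¹ else 0) + (if v = 1 then -(1 - y)⁻¹ else 0) := by
    intro v
    rcases eq_or_ne v 0 with rfl | h0
    · rw [sigma_zero σ hσ]
      simp
    · rcases eq_or_ne v 1 with rfl | h1
      · rw [sigma_one σ hσ, if_neg h0, if_pos rfl]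
        ring
      · rw [hσ v, if_neg h0, if_neg h1, if_neg h0, if_neg h1]
        ring
  have s4 : ∑ v : F, v * (v - y)⁻¹ = -1 := by
    have h1 : ∑ v : F, v * (v - y)⁻¹ = ∑ w : F, (w + y) * w⁻¹ := by
      rw [← sum_subshift (fun w => (w + y) * w⁻¹) y]
      exact Finset.sum_congr rfl fun v _ => by rw [sub_add_cancel]
    have h2 : ∀ w : F, (w + y) * w⁻¹ = (1 - (if w = 0 then 1 else 0)) + y * w⁻¹ := by
      intro w
      rcases eq_or_ne w 0 with rfl | h
      · simp
      · rw [if_neg h, add_mul, mul_inv_cancel₀ h]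
        ring
    rw [h1, Finset.sum_congr rfl fun w _ => h2 w, Finset.sum_add_distrib,
      Finset.sum_sub_distrib, ← Finset.mul_sum, sum_inv_eq_zero hq]
    simp [Finset.card_univ, FiniteField.cast_card_eq_zero]
  rw [s1, s2, Finset.sum_congr rfl fun v _ => s3 v, Finset.sum_add_distrib,
    Finset.sum_add_distrib, s4]
  simp only [Finset.sum_ite_eq' Finset.univ, Finset.mem_univ, if_true]
  rw [zero_sub, inv_neg]
  ring

lemma A1_sigma (hq : 3 < Fintype.card F) (y : F) :
    ∑ c : F, σ (σ y + c⁻¹) * c = ∑ c : F, σ (y + c⁻¹) * c := by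
  rw [A1_eq σ hσ hq, A1_eq σ hσ hq]
  rcases eq_or_ne y 0 with rfl | h0
  · rw [sigma_zero σ hσ]
    simp
  · rcases eq_or_ne y 1 with rfl | h1
    · rw [sigma_one σ hσ]
      simp
    · rw [hσ y, if_neg h0, if_neg h1]

lemma easy_inner (hq : 3 < Fintype.card F) (Y : F) : ∑ c : F, σ (Y + c⁻¹) = 0 := by
  rw [sum_inv_comp (fun c => σ (Y + c)), sum_shift (fun c => σ c) Y,
    sum_sigma_comp σ hσ (fun c => c)]
  exact sum_id_eq_zero hq

lemma const_inner (m : ℕ) (y0 : F) :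
    ∑ b : F, (∑ c : F, σ (σ (y0 + b⁻¹) + c⁻¹) * c ^ m)
      = ∑ v : F, (∑ c : F, σ (v + c⁻¹) * c ^ m) := by
  rw [sum_inv_comp (fun b => ∑ c : F, σ (σ (y0 + b) + c⁻¹) * c ^ m),
    sum_shift (fun u => ∑ c : F, σ (σ u + c⁻¹) * c ^ m) y0,
    sum_sigma_comp σ hσ (fun v => ∑ c : F, σ (v + c⁻¹) * c ^ m)]

end Sigma

/-! ### Partial fractions -/

lemma K_eq (hq : 3 < Fintype.card F) (h3 : (3:F) = 0) (a b : F) :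
    ∑ v : F, (v - a)⁻¹ * (v - b)⁻¹ = -((a - b)⁻¹) ^ 2 := by
  rcases eq_or_ne a b with rfl | hab
  · have h1 : ∑ v : F, (v - a)⁻¹ * (v - a)⁻¹ = ∑ w : F, w⁻¹ * w⁻¹ :=
      sum_subshift (fun w => w⁻¹ * w⁻¹) a
    have h2 : ∑ w : F, w⁻¹ * w⁻¹ = ∑ w : F, w * w := sum_inv_comp (fun w => w * w)
    have h3' : ∑ w : F, w * w = 0 := by
      have h := FiniteField.sum_pow_lt_card_sub_one (K := F) 2 (by omega)
      simpa [pow_two] using h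
    rw [h1, h2, h3']
    simp
  · have key : ∀ v : F, (v - a)⁻¹ * (v - b)⁻¹
        = (a - b)⁻¹ * ((v - a)⁻¹ - (v - b)⁻¹)
          + ((if v = a then ((a - b)⁻¹) ^ 2 else 0) + (if v = b then ((a - b)⁻¹) ^ 2 else 0)) := by
      intro v
      rcases eq_or_ne v a with rfl | hva
      · rw [if_pos rfl, if_neg hab]
        simp only [sub_self, inv_zero, zero_mul, zero_sub]
        ring
      · rcases eq_or_ne v b with rfl | hvb
        · rw [if_neg hva, if_pos rfl]
          have hba : (v - a)⁻¹ = -(a - v)⁻¹ := by rw [← neg_sub a v, inv_neg]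
          simp only [sub_self, inv_zero, mul_zero, sub_zero]
          rw [hba]
          ring
        · rw [if_neg hva, if_neg hvb]
          have h1 : v - a ≠ 0 := sub_ne_zero.mpr hva
          have h2 : v - b ≠ 0 := sub_ne_zero.mpr hvb
          have h4 : a - b ≠ 0 := sub_ne_zero.mpr hab
          field_simp
          ring
    rw [Finset.sum_congr rfl fun v _ => key v, Finset.sum_add_distrib, ← Finset.mul_sum]
    have e1 : ∑ v : F, ((v - a)⁻¹ - (v - b)⁻¹) = 0 := by
      rw [Finset.sum_sub_distrib, sum_subshift (fun w => w⁻¹) a,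
        sum_subshift (fun w => w⁻¹) b, sub_self]
    rw [e1, mul_zero, zero_add, Finset.sum_add_distrib]
    simp only [Finset.sum_ite_eq' Finset.univ, Finset.mem_univ, if_true]
    linear_combination ((a - b)⁻¹) ^ 2 * h3

lemma G1_eq (hq : 3 < Fintype.card F) (h3 : (3:F) = 0)
    (σ : F → F)
    (hA1 : ∀ y : F, ∑ c : F, σ (y + c⁻¹) * c = -1 - y⁻¹ - (1 - y)⁻¹)
    (a : F) :
    ∑ v : F, (v - a)⁻¹ * (∑ c : F, σ (v + c⁻¹) * c) = (a⁻¹) ^ 2 - ((a - 1)⁻¹) ^ 2 := by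
  have key : ∀ v : F, (v - a)⁻¹ * (∑ c : F, σ (v + c⁻¹) * c)
      = -(v - a)⁻¹ - (v - a)⁻¹ * (v - 0)⁻¹ + (v - a)⁻¹ * (v - 1)⁻¹ := by
    intro v
    rw [hA1 v]
    have h1 : (1 - v)⁻¹ = -(v - 1)⁻¹ := by rw [← neg_sub v 1, inv_neg]
    rw [h1, sub_zero]
    ring
  rw [Finset.sum_congr rfl fun v _ => key v, Finset.sum_add_distrib, Finset.sum_sub_distrib]
  have e0 : ∑ v : F, -(v - a)⁻¹ = 0 := by
    rw [Finset.sum_neg_distrib, sum_subshift (fun w => w⁻¹) a, sum_inv_eq_zero hq, neg_zero]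
  rw [e0, K_eq hq h3 a 0, K_eq hq h3 a 1, sub_zero]
  ring

lemma hard_inner (hq : 3 < Fintype.card F) (h3 : (3:F) = 0)
    (σ : F → F) (hσ : ∀ a : F, σ a = if a = 0 then 1 else if a = 1 then 0 else a)
    (y0 : F) :
    ∑ b : F, b * (∑ c : F, σ (σ (y0 + b⁻¹) + c⁻¹) * c)
      = (y0⁻¹) ^ 2 - ((y0 - 1)⁻¹) ^ 2 := by
  have step1 : ∑ b : F, b * (∑ c : F, σ (σ (y0 + b⁻¹) + c⁻¹) * c)
      = ∑ b : F, b * (∑ c : F, σ ((y0 + b⁻¹) + c⁻¹) * c) :=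
    Finset.sum_congr rfl fun b _ => by rw [A1_sigma σ hσ hq (y0 + b⁻¹)]
  have step2 : ∑ b : F, b * (∑ c : F, σ (y0 + b⁻¹ + c⁻¹) * c)
      = ∑ b : F, b⁻¹ * (∑ c : F, σ (y0 + b + c⁻¹) * c) := by
    rw [← sum_inv_comp (fun b => b⁻¹ * (∑ c : F, σ (y0 + b + c⁻¹) * c))]
    exact Finset.sum_congr rfl fun b _ => by rw [inv_inv]
  have step3 : ∑ b : F, b⁻¹ * (∑ c : F, σ (y0 + b + c⁻¹) * c)
      = ∑ v : F, (v - y0)⁻¹ * (∑ c : F, σ (v + c⁻¹) * c) := by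
    rw [← sum_shift (fun v => (v - y0)⁻¹ * (∑ c : F, σ (v + c⁻¹) * c)) y0]
    exact Finset.sum_congr rfl fun b _ => by rw [add_sub_cancel_left]
  rw [step1, step2, step3, G1_eq hq h3 σ (fun y => A1_eq σ hσ hq y) y0]

/-! ### The explicit character sums -/

lemma e6_expand (h3 : (3:F) = 0) (a : F) : (a - 1) ^ 6 = a ^ 6 + a ^ 3 + 1 := by
  linear_combination (-2 * a ^ 5 + 5 * a ^ 4 - 7 * a ^ 3 + 5 * a ^ 2 - 2 * a) * h3

lemma tau_eq (h3 : (3:F) = 0) (a : F) :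
    (((a ^ 3)⁻¹ - 1)⁻¹) ^ 2 = (a * (1 - a)⁻¹) ^ 6 + (if a = 0 then 1 else 0) := by
  rcases eq_or_ne a 0 with rfl | h
  · norm_num
  · rw [if_neg h, add_zero]
    have h3a : (a ^ 3)⁻¹ - 1 = (1 - a ^ 3) * (a ^ 3)⁻¹ := by
      field_simp
    have hcube : (1 - a) ^ 3 = 1 - a ^ 3 := by
      linear_combination (a ^ 2 - a) * h3
    rw [h3a, mul_inv, inv_inv, ← hcube, ← inv_pow]
    ring

lemma sum_dsub1_pow6 (hq9 : 9 ≤ Fintype.card F) (h3 : (3:F) = 0) :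
    ∑ d : F, (d - 1) ^ 6 = 0 := by
  rw [Finset.sum_congr rfl fun d _ => e6_expand h3 d, Finset.sum_add_distrib,
    Finset.sum_add_distrib, FiniteField.sum_pow_lt_card_sub_one (K := F) 6 (by omega),
    FiniteField.sum_pow_lt_card_sub_one (K := F) 3 (by omega)]
  simp [Finset.card_univ, FiniteField.cast_card_eq_zero]

lemma E0_eq (hq9 : 9 ≤ Fintype.card F) (h3 : (3:F) = 0) :
    ∑ a : F, (((a ^ 3)⁻¹ - 1)⁻¹) ^ 2 = 0 := by
  rw [Finset.sum_congr rfl fun a _ => tau_eq h3 a, Finset.sum_add_distrib]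
  have h1 : ∑ a : F, (a * (1 - a)⁻¹) ^ 6 = -1 := by
    rw [← sum_mobius_comp (fun a => (a * (1 - a)⁻¹) ^ 6)]
    have key : ∀ d : F, ((1 - d⁻¹) * (1 - (1 - d⁻¹))⁻¹) ^ 6
        = (d - 1) ^ 6 - (if d = 0 then 1 else 0) := by
      intro d
      rw [sub_sub_cancel, inv_inv]
      rcases eq_or_ne d 0 with rfl | h
      · norm_num
      · rw [if_neg h, sub_zero, sub_mul, one_mul, inv_mul_cancel₀ h]
    rw [Finset.sum_congr rfl fun d _ => key d, Finset.sum_sub_distrib,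
      sum_dsub1_pow6 hq9 h3]
    simp only [Finset.sum_ite_eq' Finset.univ, Finset.mem_univ, if_true]
    ring
  rw [h1]
  simp only [Finset.sum_ite_eq' Finset.univ, Finset.mem_univ, if_true]
  ring

lemma E1_eq (hq9 : 9 ≤ Fintype.card F) (h3 : (3:F) = 0) :
    ∑ a : F, a * (((a ^ 3)⁻¹ - 1)⁻¹) ^ 2 = -1 := by
  have step0 : ∀ a : F, a * (((a ^ 3)⁻¹ - 1)⁻¹) ^ 2 = a * (a * (1 - a)⁻¹) ^ 6 := by
    intro a
    rw [tau_eq h3 a]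
    rcases eq_or_ne a 0 with rfl | h
    · simp
    · rw [if_neg h, add_zero]
  rw [Finset.sum_congr rfl fun a _ => step0 a,
    ← sum_mobius_comp (fun a => a * (a * (1 - a)⁻¹) ^ 6)]
  have key : ∀ d : F, (1 - d⁻¹) * ((1 - d⁻¹) * (1 - (1 - d⁻¹))⁻¹) ^ 6
      = (d - 1) ^ 6 - d⁻¹ * (d - 1) ^ 6 - (if d = 0 then 1 else 0) := by
    intro d
    rw [sub_sub_cancel, inv_inv]
    rcases eq_or_ne d 0 with rfl | h
    · norm_num
    · have hh : (1 - d⁻¹) * d = d - 1 := by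
        rw [sub_mul, one_mul, inv_mul_cancel₀ h]
      rw [hh, if_neg h, sub_zero]
      ring
  rw [Finset.sum_congr rfl fun d _ => key d, Finset.sum_sub_distrib, Finset.sum_sub_distrib,
    sum_dsub1_pow6 hq9 h3]
  have h2 : ∑ d : F, d⁻¹ * (d - 1) ^ 6 = 0 := by
    have key2 : ∀ d : F, d⁻¹ * (d - 1) ^ 6 = d ^ 5 + d ^ 2 + d⁻¹ := by
      intro d
      rcases eq_or_ne d 0 with rfl | h
      · norm_num
      · rw [e6_expand h3 d]
        field_simp
    rw [Finset.sum_congr rfl fun d _ => key2 d, Finset.sum_add_distrib,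
      Finset.sum_add_distrib, FiniteField.sum_pow_lt_card_sub_one (K := F) 5 (by omega),
      FiniteField.sum_pow_lt_card_sub_one (K := F) 2 (by omega), sum_inv_eq_zero (by omega)]
    ring
  rw [h2]
  simp only [Finset.sum_ite_eq' Finset.univ, Finset.mem_univ, if_true]
  ring

end LppAux

open LppAux

/-- For `q = 3^r > 3`, `t(x) = x + ∑_{k=0}^{q-2} x^k` and `f̄₂` the reduced form of
`t(x₁^{q-4} + x₂^{q-2})`, the reduced form `g` of `t(f̄₂ + x₃^{q-2})` has total degree
`3(q-2)` (the maximum possible degree of an LPP in three variables). -/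
theorem lpp_three_vars_char3 {r : ℕ}
    {F : Type*} [Field F] [Fintype F] [DecidableEq F]
    (hF : Fintype.card F = 3 ^ r) (hq : 3 < Fintype.card F)
    (t : Polynomial F)
    (ht : t = Polynomial.X + ∑ k ∈ Finset.range (Fintype.card F - 1), Polynomial.X ^ k)
    (f₂ : MvPolynomial (Fin 2) F)
    (hred₂ : ∀ i : Fin 2, f₂.degreeOf i < Fintype.card F)
    (heq₂ : ∀ x : Fin 2 → F, eval x f₂ =
      Polynomial.eval ((x 0) ^ (Fintype.card F - 4) + (x 1) ^ (Fintype.card F - 2)) t)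
    (g : MvPolynomial (Fin 3) F)
    (hredg : ∀ i : Fin 3, g.degreeOf i < Fintype.card F)
    (heqg : ∀ x : Fin 3 → F, eval x g =
      Polynomial.eval ((eval ![x 0, x 1] f₂) + (x 2) ^ (Fintype.card F - 2)) t) :
    g.totalDegree = 3 * (Fintype.card F - 2) := by
  have hq9 : 9 ≤ Fintype.card F := card_ge_nine hF hq
  have h3 : (3 : F) = 0 := three_eq_zero hF hq
  obtain ⟨σ, hσ, hσt⟩ : ∃ σ : F → F,
      (∀ a : F, σ a = if a = 0 then 1 else if a = 1 then 0 else a) ∧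
      ∀ a : F, Polynomial.eval a t = σ a :=
    ⟨fun a => Polynomial.eval a t, fun a => sigma_eval hq t ht a, fun a => rfl⟩
  -- the function computed by `g`
  have hG : ∀ a b c : F, eval ![a, b, c] g = σ (σ ((a ^ 3)⁻¹ + b⁻¹) + c⁻¹) := by
    intro a b c
    rw [heqg ![a, b, c]]
    simp only [Matrix.cons_val_zero, Matrix.cons_val_one, Matrix.head_cons,
      Matrix.cons_val_two, Matrix.tail_cons]
    have h2 := heq₂ ![a, b]
    simp only [Matrix.cons_val_zero, Matrix.cons_val_one, Matrix.head_cons] at h2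
    rw [h2, hσt, hσt, pow_qsub4 hq9, pow_qsub2 hq, pow_qsub2 hq]
  -- the weighted character sums of `g`
  have hW : ∀ m : Fin 3 → ℕ,
      (∑ x : Fin 3 → F, eval x g * ∏ i, x i ^ m i)
        = ∑ a : F, ∑ b : F, ∑ c : F,
            σ (σ ((a ^ 3)⁻¹ + b⁻¹) + c⁻¹) * (a ^ m 0 * (b ^ m 1 * c ^ m 2)) := by
    intro m
    rw [sum3 (fun x => eval x g * ∏ i, x i ^ m i)]
    refine Finset.sum_congr rfl fun a _ => Finset.sum_congr rfl fun b _ =>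
      Finset.sum_congr rfl fun c _ => ?_
    rw [hG a b c, Fin.prod_univ_three]
    simp only [Matrix.cons_val_zero, Matrix.cons_val_one, Matrix.head_cons,
      Matrix.cons_val_two, Matrix.tail_cons]
    ring
  -- all low-weight character sums vanish
  have hW0 : ∀ m : Fin 3 → ℕ, m 0 + m 1 + m 2 ≤ 2 →
      (∑ x : Fin 3 → F, eval x g * ∏ i, x i ^ m i) = 0 := by
    intro m hm
    rw [hW m]
    have hcases : m 2 = 0 ∨ (1 ≤ m 2 ∧ m 1 = 0) ∨ (m 0 = 0 ∧ m 1 = 1 ∧ m 2 = 1) := by omega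
    rcases hcases with h | ⟨h2, h1⟩ | ⟨h0, h1, h2⟩
    · -- `m 2 = 0` : the innermost sum vanishes
      refine Finset.sum_eq_zero fun a _ => Finset.sum_eq_zero fun b _ => ?_
      have hstep : ∑ c : F, σ (σ ((a ^ 3)⁻¹ + b⁻¹) + c⁻¹) * (a ^ m 0 * (b ^ m 1 * c ^ m 2))
          = (∑ c : F, σ (σ ((a ^ 3)⁻¹ + b⁻¹) + c⁻¹)) * (a ^ m 0 * b ^ m 1) := by
        rw [Finset.sum_mul]
        exact Finset.sum_congr rfl fun c _ => by rw [h, pow_zero]; ring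
      rw [hstep, easy_inner σ hσ hq, zero_mul]
    · -- `m 1 = 0` : the inner double sum is independent of `a`
      have key : ∀ a : F, (∑ b : F, ∑ c : F,
            σ (σ ((a ^ 3)⁻¹ + b⁻¹) + c⁻¹) * (a ^ m 0 * (b ^ m 1 * c ^ m 2)))
          = a ^ m 0 * ∑ v : F, (∑ c : F, σ (v + c⁻¹) * c ^ m 2) := by
        intro a
        rw [← const_inner σ hσ (m 2) ((a ^ 3)⁻¹), Finset.mul_sum]
        refine Finset.sum_congr rfl fun b _ => ?_
        rw [Finset.mul_sum]
        refine Finset.sum_congr rfl fun c _ => ?_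
        rw [h1, pow_zero]
        ring
      rw [Finset.sum_congr rfl fun a _ => key a, ← Finset.sum_mul,
        FiniteField.sum_pow_lt_card_sub_one (K := F) (m 0) (by omega), zero_mul]
    · -- the hard case `m = (0, 1, 1)`
      have key : ∀ a : F, (∑ b : F, ∑ c : F,
            σ (σ ((a ^ 3)⁻¹ + b⁻¹) + c⁻¹) * (a ^ m 0 * (b ^ m 1 * c ^ m 2)))
          = a ^ 6 - (((a ^ 3)⁻¹ - 1)⁻¹) ^ 2 := by
        intro a
        have e : ∑ b : F, ∑ c : F,
              σ (σ ((a ^ 3)⁻¹ + b⁻¹) + c⁻¹) * (a ^ m 0 * (b ^ m 1 * c ^ m 2))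
            = ∑ b : F, b * (∑ c : F, σ (σ ((a ^ 3)⁻¹ + b⁻¹) + c⁻¹) * c) := by
          refine Finset.sum_congr rfl fun b _ => ?_
          simp only [Finset.mul_sum]
          refine Finset.sum_congr rfl fun c _ => ?_
          rw [h0, h1, h2, pow_zero, pow_one, pow_one]
          ring
        rw [e, hard_inner hq h3 σ hσ ((a ^ 3)⁻¹), inv_inv, ← pow_mul]
      rw [Finset.sum_congr rfl fun a _ => key a, Finset.sum_sub_distrib,
        FiniteField.sum_pow_lt_card_sub_one (K := F) 6 (by omega), E0_eq hq9 h3, sub_self]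
  -- the top character sum is 1
  have hW111 : (∑ x : Fin 3 → F, eval x g * ∏ i, x i ^ (fun _ : Fin 3 => 1) i) = 1 := by
    rw [hW (fun _ => 1)]
    have key : ∀ a : F, (∑ b : F, ∑ c : F,
          σ (σ ((a ^ 3)⁻¹ + b⁻¹) + c⁻¹)
            * (a ^ (fun _ : Fin 3 => 1) 0 * (b ^ (fun _ : Fin 3 => 1) 1 * c ^ (fun _ : Fin 3 => 1) 2)))
        = a ^ 7 - a * (((a ^ 3)⁻¹ - 1)⁻¹) ^ 2 := by
      intro a
      have e : ∑ b : F, ∑ c : F,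
            σ (σ ((a ^ 3)⁻¹ + b⁻¹) + c⁻¹)
              * (a ^ (fun _ : Fin 3 => 1) 0 * (b ^ (fun _ : Fin 3 => 1) 1 * c ^ (fun _ : Fin 3 => 1) 2))
          = ∑ b : F, a * (b * (∑ c : F, σ (σ ((a ^ 3)⁻¹ + b⁻¹) + c⁻¹) * c)) := by
        refine Finset.sum_congr rfl fun b _ => ?_
        simp only [Finset.mul_sum]
        refine Finset.sum_congr rfl fun c _ => ?_
        show σ (σ ((a ^ 3)⁻¹ + b⁻¹) + c⁻¹) * (a ^ 1 * (b ^ 1 * c ^ 1)) = _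
        rw [pow_one, pow_one, pow_one]
        ring
      rw [e, ← Finset.mul_sum, hard_inner hq h3 σ hσ ((a ^ 3)⁻¹), inv_inv]
      ring
    rw [Finset.sum_congr rfl fun a _ => key a, Finset.sum_sub_distrib,
      FiniteField.sum_pow_lt_card_sub_one (K := F) 7 (by omega), E1_eq hq9 h3]
    ring
  -- upper bound on the total degree
  have hub : g.totalDegree ≤ 3 * (Fintype.card F - 2) := by
    refine Finset.sup_le fun d hd => ?_
    by_contra hgt
    push_neg at hgt
    have hdsum : (d.sum fun _ e => e) = d 0 + d 1 + d 2 := by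
      rw [Finsupp.sum_fintype _ _ (fun i => rfl), Fin.sum_univ_three]
    have hdi : ∀ i, d i ≤ Fintype.card F - 1 := fun i => by
      have := (MvPolynomial.degreeOf_lt_iff
        (show 0 < Fintype.card F by omega)).mp (hredg i) d hd
      omega
    rw [hdsum] at hgt
    have hd0 := hdi 0
    have hd1 := hdi 1
    have hd2 := hdi 2
    have hmle : ∀ i : Fin 3, (fun i => Fintype.card F - 1 - d i) i ≤ Fintype.card F - 2 := by
      intro i
      match i with
      | 0 => show Fintype.card F - 1 - d 0 ≤ Fintype.card F - 2; omega
      | 1 => show Fintype.card F - 1 - d 1 ≤ Fintype.card F - 2; omega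
      | 2 => show Fintype.card F - 1 - d 2 ≤ Fintype.card F - 2; omega
    have hinv := inversion hq g hredg (fun i => Fintype.card F - 1 - d i) hmle
    have hm2 : (fun i => Fintype.card F - 1 - d i) 0 + (fun i => Fintype.card F - 1 - d i) 1
        + (fun i => Fintype.card F - 1 - d i) 2 ≤ 2 := by
      show Fintype.card F - 1 - d 0 + (Fintype.card F - 1 - d 1) + (Fintype.card F - 1 - d 2) ≤ 2
      omega
    rw [hW0 (fun i => Fintype.card F - 1 - d i) hm2] at hinv
    have hBd : (Finsupp.equivFunOnFinite.symm
        fun i => Fintype.card F - 1 - (fun i => Fintype.card F - 1 - d i) i) = d := by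
      apply DFunLike.ext
      intro i
      show Fintype.card F - 1 - (Fintype.card F - 1 - d i) = d i
      have := hdi i
      omega
    rw [hBd] at hinv
    exact (MvPolynomial.mem_support_iff.mp hd) (neg_eq_zero.mp hinv.symm)
  -- lower bound on the total degree
  have hlb : 3 * (Fintype.card F - 2) ≤ g.totalDegree := by
    have hinv := inversion hq g hredg (fun _ => 1)
      (fun i => by show (1:ℕ) ≤ Fintype.card F - 2; omega)
    rw [hW111] at hinv
    have hBmem : (Finsupp.equivFunOnFinite.symm
        fun i : Fin 3 => Fintype.card F - 1 - (fun _ : Fin 3 => 1) i) ∈ g.support := by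
      rw [MvPolynomial.mem_support_iff]
      intro hzero
      rw [hzero, neg_zero] at hinv
      exact one_ne_zero hinv
    have hle := MvPolynomial.le_totalDegree hBmem
    have hsum : ((Finsupp.equivFunOnFinite.symm
        fun i : Fin 3 => Fintype.card F - 1 - (fun _ : Fin 3 => 1) i)).sum (fun _ e => e)
          = 3 * (Fintype.card F - 2) := by
      rw [Finsupp.sum_fintype _ _ (fun i => rfl), Fin.sum_univ_three]
      show (Fintype.card F - 1 - 1) + (Fintype.card F - 1 - 1) + (Fintype.card F - 1 - 1) = _
      omega
    omega
  omega
end
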